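/- arXiv:2202.02384 — 4 statements merged into one kernel-verified Lean document; each statement's English description precedes it below -/
import Mathlib

section
/- For any integers a, a' > 1, if L_a ∩ L_{a'} ≠ ∅ then a ∈ L_{a'} or a' ∈ L_a. Consequently, exactly one of the following holds: L_a ∩ L_{a'} = ∅, or L_a ⊆ L_{a'}, or L_{a'} ⊆ L_a. -/
noncomputable section

/-- `P n` is the largest prime factor of `n`. -/
def P (n : ℕ) : ℕ := n.primeFactors.sup id

/-- `Lset a` is the set of L-multiples of `a`. -/
def Lset (a : ℕ) : Set ℕ :=
  {m | ∃ b : ℕ, 0 < b ∧ m = b * a ∧ ∀ p : ℕ, p.Prime → p ∣ b → P a ≤ p}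

/-- `dL a` is the natural density of `Lset a`. -/
def dL (a : ℕ) : ℝ :=
  (1 / (a : ℝ)) * ∏ p ∈ (Finset.range (P a)).filter Nat.Prime, (1 - 1 / (p : ℝ))

/-- `f A = ∑_{a ∈ A} 1/(a log a)`. -/
def f (A : Set ℕ) : ℝ := ∑' a : A, 1 / (((a : ℕ) : ℝ) * Real.log ((a : ℕ) : ℝ))

/-- A set is primitive if no member divides another. -/
def Primitive (A : Set ℕ) : Prop := ∀ a ∈ A, ∀ b ∈ A, a ≠ b → ¬ a ∣ b

/-- A set is L-primitive if no member is an L-multiple of another. -/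
def LPrimitive (A : Set ℕ) : Prop := ∀ a ∈ A, ∀ a' ∈ A, a ≠ a' → a' ∉ Lset a

/-- `μ x = e^γ log x ∏_{p < x} (1 - 1/p)`. -/
def μ (x : ℝ) : ℝ :=
  Real.exp Real.eulerMascheroniConstant * Real.log x *
    ∏ p ∈ (Finset.range ⌈x⌉₊).filter Nat.Prime, (1 - 1 / (p : ℝ))

/-- `m q = inf_{p ≥ q prime} μ p`. -/
def m (q : ℕ) : ℝ := sInf {y | ∃ p : ℕ, p.Prime ∧ q ≤ p ∧ y = μ p}

/-- `M x = sup_{y ≥ x} μ y`. -/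
def M (x : ℝ) : ℝ := sSup {y | ∃ z : ℝ, x ≤ z ∧ y = μ z}


lemma P_mono {a b : ℕ} (h : a ∣ b) (hb : b ≠ 0) : P a ≤ P b :=
  Finset.sup_mono (Nat.primeFactors_mono h hb)

lemma Lset_subset_of_mem {a a' : ℕ} (ha : 0 < a) (h : a' ∈ Lset a) :
    Lset a' ⊆ Lset a := by
  obtain ⟨c, hc0, hceq, hcp⟩ := h
  have hdvd : a ∣ a' := Dvd.intro_left c hceq.symm
  have ha'0 : a' ≠ 0 := by rw [hceq]; positivity
  intro x hx
  obtain ⟨b, hb0, hxeq, hbp⟩ := hx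
  refine ⟨b * c, by positivity, by rw [hxeq, hceq]; ring, ?_⟩
  intro p pp hpd
  rcases (Nat.Prime.dvd_mul pp).mp hpd with h | h
  · exact le_trans (P_mono hdvd ha'0) (hbp p pp h)
  · exact hcp p pp h

lemma key_lemma {a a' b b' mm : ℕ} (ha : 0 < a) (ha' : 0 < a') (hb : 0 < b) (hb' : 0 < b')
    (hm : mm = b * a) (hm' : mm = b' * a')
    (hbp : ∀ p : ℕ, p.Prime → p ∣ b → P a ≤ p)
    (hbp' : ∀ p : ℕ, p.Prime → p ∣ b' → P a' ≤ p)
    (hq : P a ≤ P a')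
    (hv : P a = P a' → a.factorization (P a) ≤ a'.factorization (P a)) :
    a' ∈ Lset a := by
  have hfac : b.factorization + a.factorization = b'.factorization + a'.factorization := by
    rw [← Nat.factorization_mul hb.ne' ha.ne', ← Nat.factorization_mul hb'.ne' ha'.ne',
      ← hm, ← hm']
  -- a ∣ a'
  have hdvd : a ∣ a' := by
    rw [← Nat.factorization_le_iff_dvd ha.ne' ha'.ne']
    intro p
    by_cases hpa : a.factorization p = 0
    · simp [hpa]
    · have hps : p ∈ a.primeFactors := by
        rw [← Nat.support_factorization]; exact Finsupp.mem_support_iff.mpr hpa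
      have pp : p.Prime := Nat.prime_of_mem_primeFactors hps
      have hpPa : p ≤ P a := Finset.le_sup (f := id) hps
      have heqp : b.factorization p + a.factorization p
          = b'.factorization p + a'.factorization p := by
        have := congrFun (congrArg DFunLike.coe hfac) p
        simpa using this
      rcases lt_or_eq_of_le (le_trans hpPa hq) with hlt | heq
      · have hb'0 : b'.factorization p = 0 := by
          apply Nat.factorization_eq_zero_of_not_dvd
          intro hd
          exact absurd (hbp' p pp hd) (not_le.mpr hlt)
        omega
      · have h1 : P a = p := le_antisymm (heq ▸ hq) hpPa
        have := hv (h1.trans heq)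
        rw [h1] at this
        exact this
  have hc0 : 0 < a' / a := Nat.div_pos (Nat.le_of_dvd ha' hdvd) ha
  refine ⟨a' / a, hc0, (Nat.div_mul_cancel hdvd).symm, ?_⟩
  intro p pp hpd
  by_contra hlt
  push_neg at hlt
  have hvb : b.factorization p = 0 := by
    apply Nat.factorization_eq_zero_of_not_dvd
    intro hd
    exact absurd (hbp p pp hd) (not_le.mpr hlt)
  have hvb' : b'.factorization p = 0 := by
    apply Nat.factorization_eq_zero_of_not_dvd
    intro hd
    exact absurd (hbp' p pp hd) (not_le.mpr (lt_of_lt_of_le hlt hq))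
  have heqp : b.factorization p + a.factorization p
      = b'.factorization p + a'.factorization p := by
    have := congrFun (congrArg DFunLike.coe hfac) p
    simpa using this
  have hpos : 0 < (a' / a).factorization p :=
    Nat.Prime.factorization_pos_of_dvd pp hc0.ne' hpd
  rw [Nat.factorization_div hdvd] at hpos
  simp only [Finsupp.tsub_apply] at hpos
  omega

lemma Lset_inter_nonempty {a a' : ℕ} (ha : 1 < a) (ha' : 1 < a')
    (h : (Lset a ∩ Lset a').Nonempty) : a ∈ Lset a' ∨ a' ∈ Lset a := by
  obtain ⟨mm, ⟨b, hb0, hm, hbp⟩, ⟨b', hb'0, hm', hbp'⟩⟩ := h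
  have ha0 : 0 < a := by omega
  have ha'0 : 0 < a' := by omega
  rcases le_or_gt (P a) (P a') with h1 | h1
  · by_cases heq : P a = P a'
    · rcases le_total (a.factorization (P a)) (a'.factorization (P a)) with hf | hf
      · exact Or.inr (key_lemma ha0 ha'0 hb0 hb'0 hm hm' hbp hbp' h1 fun _ => hf)
      · refine Or.inl (key_lemma ha'0 ha0 hb'0 hb0 hm' hm hbp' hbp heq.ge ?_)
        intro _
        rw [← heq]
        exact hf
    · exact Or.inr (key_lemma ha0 ha'0 hb0 hb'0 hm hm' hbp hbp' h1 fun h => absurd h heq)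
  · exact Or.inl (key_lemma ha'0 ha0 hb'0 hb0 hm' hm hbp' hbp h1.le
      fun h => absurd h h1.ne)

/-- Lemma 2.1 (trichotomy): for integers `a, a' > 1`, if `L_a ∩ L_{a'} ≠ ∅` then
`a ∈ L_{a'}` or `a' ∈ L_a`; consequently `L_a ∩ L_{a'} = ∅`, or `L_a ⊆ L_{a'}`,
or `L_{a'} ⊆ L_a`. -/
theorem Lset_trichotomy (a a' : ℕ) (ha : 1 < a) (ha' : 1 < a') :
    ((Lset a ∩ Lset a').Nonempty → a ∈ Lset a' ∨ a' ∈ Lset a) ∧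
    (Lset a ∩ Lset a' = ∅ ∨ Lset a ⊆ Lset a' ∨ Lset a' ⊆ Lset a) := by
  refine ⟨Lset_inter_nonempty ha ha', ?_⟩
  rcases Set.eq_empty_or_nonempty (Lset a ∩ Lset a') with he | hne
  · exact Or.inl he
  · rcases Lset_inter_nonempty ha ha' hne with h | h
    · exact Or.inr (Or.inl (Lset_subset_of_mem (by omega) h))
    · exact Or.inr (Or.inr (Lset_subset_of_mem (by omega) h))
end
end

section
/- If A ⊆ ℤ_{>1} is an L-primitive set, then for any two distinct elements a, a' ∈ A the sets L_a and L_{a'} are disjoint. -/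
noncomputable section

lemma Lset_key {a a' b b' : ℕ} (ha : 1 < a) (ha' : 1 < a') (hb : 0 < b) (hb' : 0 < b')
    (heq : b * a = b' * a')
    (hB : ∀ p : ℕ, p.Prime → p ∣ b → P a ≤ p)
    (hB' : ∀ p : ℕ, p.Prime → p ∣ b' → P a' ≤ p)
    (hq : P a < P a' ∨ (P a = P a' ∧ a.factorization (P a) ≤ a'.factorization (P a))) :
    a' ∈ Lset a := by
  have ha0 : a ≠ 0 := by omega
  have ha'0 : a' ≠ 0 := by omega
  have hPa : P a ≤ P a' := hq.elim le_of_lt (fun h => h.1.le)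
  have hfm : (b * a).factorization = b.factorization + a.factorization :=
    Nat.factorization_mul hb.ne' ha0
  have hfm' : (b' * a').factorization = b'.factorization + a'.factorization :=
    Nat.factorization_mul hb'.ne' ha'0
  have hE : ∀ p : ℕ, b.factorization p + a.factorization p
      = b'.factorization p + a'.factorization p := by
    intro p
    have := congrArg (fun n : ℕ => n.factorization p) heq
    simpa [hfm, hfm'] using this
  -- equality of valuations below P a
  have heqv : ∀ p : ℕ, p.Prime → p < P a →
      a.factorization p = a'.factorization p := by
    intro p hp hlt
    have h1 : b.factorization p = 0 :=
      Nat.factorization_eq_zero_of_not_dvd (fun h => absurd (hB p hp h) (not_le.2 hlt))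
    have h2 : b'.factorization p = 0 :=
      Nat.factorization_eq_zero_of_not_dvd
        (fun h => absurd (hB' p hp h) (not_le.2 (hlt.trans_le hPa)))
    have := hE p
    omega
  have hstep : ∀ p : ℕ, a.factorization p ≤ a'.factorization p := by
    intro p
    by_cases hp : p.Prime
    · by_cases hlt : p < P a
      · exact (heqv p hp hlt).le
      · by_cases hdvd : p ∣ a
        · have hmem : p ∈ a.primeFactors := Nat.mem_primeFactors.mpr ⟨hp, hdvd, ha0⟩
          have hple : p ≤ P a := Finset.le_sup (f := id) hmem
          have hpeq : p = P a := le_antisymm hple (not_lt.mp hlt)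
          rcases hq with h | ⟨he, hle⟩
          · have h2 : b'.factorization p = 0 :=
              Nat.factorization_eq_zero_of_not_dvd
                (fun hd => absurd (hB' p hp hd) (not_le.2 (hpeq ▸ h)))
            have := hE p
            omega
          · rw [hpeq]; exact hle
        · simp [Nat.factorization_eq_zero_of_not_dvd hdvd]
    · simp [Nat.factorization_eq_zero_of_not_prime _ hp]
  have hdvd : a ∣ a' := by
    refine (Nat.factorization_le_iff_dvd ha0 ha'0).mp ?_
    exact Finsupp.le_def.mpr hstep
  obtain ⟨c, hc⟩ := hdvd
  have hc0 : c ≠ 0 := by rintro rfl; simp at hc; omega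
  refine ⟨c, Nat.pos_of_ne_zero hc0, by rw [hc, mul_comm], ?_⟩
  intro p hp hpc
  by_contra hlt
  push_neg at hlt
  have he1 : a'.factorization p = a.factorization p + c.factorization p := by
    rw [hc, Nat.factorization_mul ha0 hc0]; simp
  have he2 : a.factorization p = a'.factorization p := heqv p hp hlt
  have hcpos : 0 < c.factorization p :=
    (Nat.Prime.factorization_pos_of_dvd hp hc0 hpc)
  omega

/-- Corollary 2.2: if `A` is an L-primitive set, then `L_a` and `L_{a'}` are disjoint
for distinct `a, a' ∈ A`. -/
theorem Lset_disjoint_of_LPrimitive (A : Set ℕ) (hA1 : ∀ a ∈ A, 1 < a)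
    (hA : LPrimitive A) (a a' : ℕ) (ha : a ∈ A) (ha' : a' ∈ A) (hne : a ≠ a') :
    Disjoint (Lset a) (Lset a') := by
  have h1 : 1 < a := hA1 a ha
  have h1' : 1 < a' := hA1 a' ha'
  rw [Set.disjoint_left]
  rintro m ⟨b, hb, rfl, hBb⟩ ⟨b', hb', heq, hBb'⟩
  rcases lt_trichotomy (P a) (P a') with h | h | h
  · exact hA a ha a' ha' hne (Lset_key h1 h1' hb hb' heq hBb hBb' (Or.inl h))
  · rcases le_total (a.factorization (P a)) (a'.factorization (P a)) with hle | hle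
    · exact hA a ha a' ha' hne (Lset_key h1 h1' hb hb' heq hBb hBb' (Or.inr ⟨h, hle⟩))
    · refine hA a' ha' a ha hne.symm
        (Lset_key h1' h1 hb' hb heq.symm hBb' hBb (Or.inr ⟨h.symm, ?_⟩))
      rw [← h]; exact hle
  · exact hA a' ha' a ha hne.symm
      (Lset_key h1' h1 hb' hb heq.symm hBb' hBb (Or.inl h))
end
end

section
/- Let A be a primitive set of composite numbers and let v ∈ (0,1). Suppose P(a)^{1+v} > a for all a ∈ A. Then the sets L_{a·c}, ranging over pairs (a,c) with a ∈ A and c ∈ C_a^v, are pairwise disjoint: for distinct pairs (a,c) ≠ (a',c') with a,a' ∈ A, c ∈ C_a^v, c' ∈ C_{a'}^v, one has L_{ac} ∩ L_{a'c'} = ∅. -/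
noncomputable section

/-- `Cset a v` is the set of positive integers all of whose prime factors lie in the
interval `[P(a*), P(a*)^{1/√v})`, where `a* = a / P(a)`. -/
def Cset (a : ℕ) (v : ℝ) : Set ℕ :=
  {c | 0 < c ∧ ∀ p : ℕ, p.Prime → p ∣ c →
    P (a / P a) ≤ p ∧ (p : ℝ) < (P (a / P a) : ℝ) ^ (1 / Real.sqrt v)}

lemma P_mem_primeFactors {n : ℕ} (hn : 1 < n) : P n ∈ n.primeFactors := by
  obtain ⟨b, hb, hsup⟩ := Finset.exists_mem_eq_sup n.primeFactors
    (Nat.nonempty_primeFactors.mpr hn) id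
  rw [P, hsup]; exact hb

lemma P_prime {n : ℕ} (hn : 1 < n) : (P n).Prime :=
  Nat.prime_of_mem_primeFactors (P_mem_primeFactors hn)

lemma P_dvd {n : ℕ} (hn : 1 < n) : P n ∣ n :=
  Nat.dvd_of_mem_primeFactors (P_mem_primeFactors hn)

lemma le_P {n r : ℕ} (hn : n ≠ 0) (hr : r.Prime) (hd : r ∣ n) : r ≤ P n :=
  Finset.le_sup (f := id) (Nat.mem_primeFactors.mpr ⟨hr, hd, hn⟩)

lemma P_mul_eq {a c : ℕ} (ha : 1 < a) (hc : 0 < c)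
    (h : ∀ r : ℕ, r.Prime → r ∣ c → r ≤ P a) : P (a * c) = P a := by
  have hac : 1 < a * c := lt_of_lt_of_le ha (Nat.le_mul_of_pos_right a hc)
  apply le_antisymm
  · rcases ((P_prime hac).dvd_mul).mp (P_dvd hac) with h1 | h2
    · exact le_P (by omega) (P_prime hac) h1
    · exact h _ (P_prime hac) h2
  · exact le_P (by positivity) (P_prime ha) ((P_dvd ha).mul_right c)

lemma fact_pos_imp {n r : ℕ} (h : n.factorization r ≠ 0) : r.Prime ∧ r ∣ n :=
  ⟨by by_contra hr; exact h (Nat.factorization_eq_zero_of_not_prime n hr),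
   Nat.dvd_of_factorization_pos h⟩

lemma side_facts {v : ℝ} (hv0 : 0 < v) (hv1 : v < 1) {a : ℕ} (ha : 1 < a)
    (hcomp : ¬ a.Prime) (hPa : (a : ℝ) < (P a : ℝ) ^ ((1:ℝ) + v)) :
    1 < a / P a ∧ ((P (a / P a) : ℝ) < (P a : ℝ) ^ v) ∧ P (a / P a) < P a ∧
      a = P a * (a / P a) := by
  have hq := P_prime ha
  have hqd := P_dvd ha
  have haeq : a = P a * (a / P a) := (Nat.mul_div_cancel' hqd).symm
  have ha1pos : 0 < a / P a := Nat.div_pos (Nat.le_of_dvd (by omega) hqd) hq.pos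
  have ha1 : 1 < a / P a := by
    by_contra h
    have h1 : a / P a = 1 := by omega
    rw [h1, mul_one] at haeq
    exact hcomp (haeq ▸ hq)
  have hq1 : (1:ℝ) < (P a : ℝ) := by exact_mod_cast hq.one_lt
  have hq0 : (0:ℝ) < (P a : ℝ) := by linarith
  have hsize : ((a / P a : ℕ) : ℝ) < (P a : ℝ) ^ v := by
    have hcast : (a : ℝ) = (P a : ℝ) * ((a / P a : ℕ) : ℝ) := by
      rw [← Nat.cast_mul, ← haeq]
    have hrw : (P a : ℝ) ^ ((1:ℝ) + v) = (P a : ℝ) * (P a : ℝ) ^ v := by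
      rw [Real.rpow_add hq0, Real.rpow_one]
    rw [hcast, hrw] at hPa
    exact lt_of_mul_lt_mul_left hPa hq0.le
  have hp_le : (P (a / P a) : ℝ) ≤ ((a / P a : ℕ) : ℝ) := by
    exact_mod_cast Nat.le_of_dvd ha1pos (P_dvd ha1)
  have hppa : (P (a / P a) : ℝ) < (P a : ℝ) ^ v := lt_of_le_of_lt hp_le hsize
  refine ⟨ha1, hppa, ?_, haeq⟩
  have : (P a : ℝ) ^ v < (P a : ℝ) := by
    nth_rewrite 2 [← Real.rpow_one (P a : ℝ)]
    exact Real.rpow_lt_rpow_of_exponent_lt hq1 hv1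
  exact_mod_cast hppa.trans this


lemma rpow_sqrt_bound {v : ℝ} (hv0 : 0 < v) (hv1 : v < 1) {p q : ℕ}
    (hp : 1 ≤ p) (hpq : (p : ℝ) < (q : ℝ) ^ v) :
    (p : ℝ) ^ ((1:ℝ) / Real.sqrt v) < (q : ℝ) := by
  have hp1 : (1:ℝ) ≤ (p : ℝ) := by exact_mod_cast hp
  have hsv : 0 < Real.sqrt v := Real.sqrt_pos.mpr hv0
  have hsvm : Real.sqrt v * Real.sqrt v = v := Real.mul_self_sqrt hv0.le
  have hvsv : v ≤ Real.sqrt v := by nlinarith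
  have h1 : (1:ℝ) / Real.sqrt v ≤ 1 / v := one_div_le_one_div_of_le hv0 hvsv
  have h2 : (p : ℝ) ^ ((1:ℝ) / Real.sqrt v) ≤ (p : ℝ) ^ ((1:ℝ)/v) :=
    Real.rpow_le_rpow_of_exponent_le hp1 h1
  have h3 : (p : ℝ) ^ ((1:ℝ)/v) < (q : ℝ) := by
    have h4 := Real.rpow_lt_rpow (by positivity) hpq (by positivity : (0:ℝ) < 1/v)
    rwa [← Real.rpow_mul (by positivity), mul_one_div_cancel hv0.ne', Real.rpow_one] at h4
  linarith

lemma c_prime_lt {v : ℝ} (hv0 : 0 < v) (hv1 : v < 1) {a : ℕ}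
    (ha1 : 1 < a / P a) (hpq : ((P (a / P a)) : ℝ) < (P a : ℝ) ^ v)
    {c r : ℕ} (hc : c ∈ Cset a v) (hr : r.Prime) (hrc : r ∣ c) : r < P a := by
  obtain ⟨-, hcp⟩ := hc
  obtain ⟨-, hlt⟩ := hcp r hr hrc
  have h := hlt.trans (rpow_sqrt_bound hv0 hv1 (P_prime ha1).one_lt.le hpq)
  exact_mod_cast h

lemma core {A : Set ℕ} (hA1 : ∀ a ∈ A, 1 < a) (hcomp : ∀ a ∈ A, ¬ a.Prime)
    (hprim : Primitive A) {v : ℝ} (hv0 : 0 < v) (hv1 : v < 1)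
    (hP : ∀ a ∈ A, (a : ℝ) < (P a : ℝ) ^ (1 + v))
    {a a' : ℕ} (ha : a ∈ A) (ha' : a' ∈ A)
    {c c' : ℕ} (hc : c ∈ Cset a v) (hc' : c' ∈ Cset a' v)
    (hne : (a, c) ≠ (a', c')) (hqq : P a ≤ P a')
    {n : ℕ} (hn : n ∈ Lset (a * c)) (hn' : n ∈ Lset (a' * c')) : False := by
  have haA := hA1 a ha
  have ha'A := hA1 a' ha'
  obtain ⟨ha1, hpq, hpltq, haeq⟩ := side_facts hv0 hv1 haA (hcomp a ha) (hP a ha)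
  obtain ⟨ha1', hpq', hpltq', haeq'⟩ := side_facts hv0 hv1 ha'A (hcomp a' ha') (hP a' ha')
  set q := P a with hqdef
  set q' := P a' with hq'def
  set s := a / q with hsdef
  set s' := a' / q' with hs'def
  set p := P s with hpdef
  set p' := P s' with hp'def
  have hqP : q.Prime := P_prime haA
  have hq'P : q'.Prime := P_prime ha'A
  have hpP : p.Prime := P_prime ha1
  have hp'P : p'.Prime := P_prime ha1'
  have hc0 : 0 < c := hc.1
  have hc'0 : 0 < c' := hc'.1
  obtain ⟨b, hb0, hnb, hbP⟩ := hn
  obtain ⟨b', hb'0, hnb', hb'P⟩ := hn'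
  have hPac : P (a * c) = q :=
    P_mul_eq haA hc0 (fun r hr hd => (c_prime_lt hv0 hv1 ha1 hpq hc hr hd).le)
  have hPac' : P (a' * c') = q' :=
    P_mul_eq ha'A hc'0 (fun r hr hd => (c_prime_lt hv0 hv1 ha1' hpq' hc' hr hd).le)
  have hb_small : ∀ r, r < q → b.factorization r = 0 := by
    intro r hr
    by_contra h
    obtain ⟨hrp, hrd⟩ := fact_pos_imp h
    have := hbP r hrp hrd
    rw [hPac] at this
    omega
  have hb'_small : ∀ r, r < q' → b'.factorization r = 0 := by
    intro r hr
    by_contra h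
    obtain ⟨hrp, hrd⟩ := fact_pos_imp h
    have := hb'P r hrp hrd
    rw [hPac'] at this
    omega
  have hfn : ∀ r, n.factorization r
      = b.factorization r + a.factorization r + c.factorization r := by
    intro r
    rw [hnb, Nat.factorization_mul hb0.ne' (Nat.mul_ne_zero (by omega) hc0.ne'),
      Nat.factorization_mul (by omega : a ≠ 0) hc0.ne']
    simp [add_assoc]
  have hfn' : ∀ r, n.factorization r
      = b'.factorization r + a'.factorization r + c'.factorization r := by
    intro r
    rw [hnb', Nat.factorization_mul hb'0.ne' (Nat.mul_ne_zero (by omega) hc'0.ne'),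
      Nat.factorization_mul (by omega : a' ≠ 0) hc'0.ne']
    simp [add_assoc]
  have E : ∀ r, b.factorization r + a.factorization r + c.factorization r
      = b'.factorization r + a'.factorization r + c'.factorization r :=
    fun r => (hfn r).symm.trans (hfn' r)
  have ha_fac : ∀ r, a.factorization r = (if q = r then 1 else 0) + s.factorization r := by
    intro r
    nth_rewrite 1 [haeq]
    rw [Nat.factorization_mul hqP.pos.ne' (by omega : s ≠ 0), hqP.factorization]
    simp [Finsupp.single_apply]
  have ha'_fac : ∀ r, a'.factorization r = (if q' = r then 1 else 0) + s'.factorization r := by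
    intro r
    nth_rewrite 1 [haeq']
    rw [Nat.factorization_mul hq'P.pos.ne' (by omega : s' ≠ 0), hq'P.factorization]
    simp [Finsupp.single_apply]
  have hs_fac : ∀ r, s.factorization r ≠ 0 → r.Prime ∧ r ≤ p := by
    intro r h
    obtain ⟨hrp, hrd⟩ := fact_pos_imp h
    exact ⟨hrp, le_P (by omega) hrp hrd⟩
  have hs'_fac : ∀ r, s'.factorization r ≠ 0 → r.Prime ∧ r ≤ p' := by
    intro r h
    obtain ⟨hrp, hrd⟩ := fact_pos_imp h
    exact ⟨hrp, le_P (by omega) hrp hrd⟩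
  have hfa_q : a.factorization q = 1 := by
    rw [ha_fac q, if_pos rfl]
    by_cases h : s.factorization q = 0
    · omega
    · exact absurd (hs_fac q h).2 (by omega)
  have hfa'_q : a'.factorization q' = 1 := by
    rw [ha'_fac q', if_pos rfl]
    by_cases h : s'.factorization q' = 0
    · omega
    · exact absurd (hs'_fac q' h).2 (by omega)
  have hsp_pos : 0 < s.factorization p :=
    hpP.factorization_pos_of_dvd (by omega) (P_dvd ha1)
  have hs'p_pos : 0 < s'.factorization p' :=
    hp'P.factorization_pos_of_dvd (by omega) (P_dvd ha1')
  have hc_small : ∀ r, c.factorization r ≠ 0 →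
      p ≤ r ∧ r < q ∧ r.Prime ∧ ((r : ℝ) < (p : ℝ) ^ ((1:ℝ) / Real.sqrt v)) := by
    intro r h
    obtain ⟨hrp, hrd⟩ := fact_pos_imp h
    obtain ⟨h1, h2⟩ := hc.2 r hrp hrd
    exact ⟨h1, c_prime_lt hv0 hv1 ha1 hpq hc hrp hrd, hrp, by exact_mod_cast h2⟩
  have hc'_small : ∀ r, c'.factorization r ≠ 0 →
      p' ≤ r ∧ r < q' ∧ r.Prime ∧ ((r : ℝ) < (p' : ℝ) ^ ((1:ℝ) / Real.sqrt v)) := by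
    intro r h
    obtain ⟨hrp, hrd⟩ := fact_pos_imp h
    obtain ⟨h1, h2⟩ := hc'.2 r hrp hrd
    exact ⟨h1, c_prime_lt hv0 hv1 ha1' hpq' hc' hrp hrd, hrp, by exact_mod_cast h2⟩
  rcases eq_or_lt_of_le hqq with hqe | hqlt
  · -- CASE q = q'
    have E2 : ∀ r, r < q → a.factorization r + c.factorization r
        = a'.factorization r + c'.factorization r := by
      intro r hr
      have h1 := E r
      rw [hb_small r hr, hb'_small r (by omega)] at h1
      omega
    -- common tail: if a = a' then c = c' and contradiction with hne
    have htail : a = a' → False := by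
      intro haa
      have hcc : c = c' := by
        have hfc : c.factorization = c'.factorization := by
          ext r
          rcases Nat.lt_or_ge r q with hr | hr
          · have h1 := E2 r hr
            rw [haa] at h1
            omega
          · have h1 : c.factorization r = 0 := by
              by_contra h; exact absurd (hc_small r h).2.1 (by omega)
            have h2 : c'.factorization r = 0 := by
              by_contra h; exact absurd (hc'_small r h).2.1 (by omega)
            rw [h1, h2]
        exact Nat.factorization_inj (by simp [hc0.ne'] : c ∈ {x : ℕ | x ≠ 0})
          (by simp [hc'0.ne']) hfc
      exact hne (by rw [haa, hcc])
    rcases lt_trichotomy p p' with hpp | hpp | hpp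
    · -- p < p' : a ∣ a', a ≠ a'
      have hdvd : a ∣ a' := by
        rw [← Nat.factorization_le_iff_dvd (by omega) (by omega), Finsupp.le_def]
        intro r
        by_cases h0 : a.factorization r = 0
        · simp [h0]
        rcases eq_or_ne r q with hrq | hrq
        · rw [hrq, hfa_q, ha'_fac q, if_pos (by omega)]
          omega
        · have hfr : a.factorization r = s.factorization r := by
            rw [ha_fac r, if_neg (fun hh => hrq hh.symm), zero_add]
          have hsr : s.factorization r ≠ 0 := by rw [hfr] at h0; exact h0
          have hrp := (hs_fac r hsr).2
          have hcr' : c'.factorization r = 0 := by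
            by_contra h
            exact absurd (hc'_small r h).1 (by omega)
          have hE := E2 r (by omega)
          omega
      have hane : a ≠ a' := by
        intro h
        have h1 : a.factorization p' = 0 := by
          have hs0 : s.factorization p' = 0 := by
            by_contra hh
            exact absurd (hs_fac p' hh).2 (by omega)
          rw [ha_fac p', if_neg (by omega), hs0]
        have h2 : a'.factorization p' ≠ 0 := by
          have hh : a'.factorization p' = s'.factorization p' := by
            rw [ha'_fac p', if_neg (by omega), zero_add]
          omega
        rw [h] at h1
        exact h2 h1
      exact hprim a ha a' ha' hane hdvd
    · -- p = p'
      rcases le_total (s.factorization p) (s'.factorization p) with hle | hle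
      · have hdvd : a ∣ a' := by
          rw [← Nat.factorization_le_iff_dvd (by omega) (by omega), Finsupp.le_def]
          intro r
          by_cases h0 : a.factorization r = 0
          · simp [h0]
          rcases eq_or_ne r q with hrq | hrq
          · rw [hrq, hfa_q, ha'_fac q, if_pos (by omega)]
            omega
          · have hfr : a.factorization r = s.factorization r := by
              rw [ha_fac r, if_neg (fun hh => hrq hh.symm), zero_add]
            have hsr : s.factorization r ≠ 0 := by rw [hfr] at h0; exact h0
            have hrp := (hs_fac r hsr).2
            rcases eq_or_ne r p with hrp2 | hrp2
            · have h2 : a'.factorization r = s'.factorization r := by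
                rw [ha'_fac r, if_neg (by omega), zero_add]
              rw [hfr, h2, hrp2]
              exact hle
            · have hcr : c.factorization r = 0 := by
                by_contra h
                exact absurd (hc_small r h).1 (by omega)
              have hcr' : c'.factorization r = 0 := by
                by_contra h
                exact absurd (hc'_small r h).1 (by omega)
              have hE := E2 r (by omega)
              omega
        by_cases haa : a = a'
        · exact htail haa
        · exact hprim a ha a' ha' haa hdvd
      · have hdvd : a' ∣ a := by
          rw [← Nat.factorization_le_iff_dvd (by omega) (by omega), Finsupp.le_def]
          intro r
          by_cases h0 : a'.factorization r = 0
          · simp [h0]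
          rcases eq_or_ne r q' with hrq | hrq
          · rw [hrq, hfa'_q, ha_fac q', if_pos (by omega)]
            omega
          · have hfr : a'.factorization r = s'.factorization r := by
              rw [ha'_fac r, if_neg (fun hh => hrq hh.symm), zero_add]
            have hsr : s'.factorization r ≠ 0 := by rw [hfr] at h0; exact h0
            have hrp := (hs'_fac r hsr).2
            rcases eq_or_ne r p with hrp2 | hrp2
            · have h2 : a.factorization r = s.factorization r := by
                rw [ha_fac r, if_neg (by omega), zero_add]
              rw [hfr, h2, hrp2]
              exact hle
            · have hcr : c.factorization r = 0 := by
                by_contra h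
                exact absurd (hc_small r h).1 (by omega)
              have hcr' : c'.factorization r = 0 := by
                by_contra h
                exact absurd (hc'_small r h).1 (by omega)
              have hE := E2 r (by omega)
              omega
        by_cases haa : a = a'
        · exact htail haa
        · exact hprim a' ha' a ha (fun h => haa h.symm) hdvd
    · -- p' < p : a' ∣ a, a' ≠ a
      have hdvd : a' ∣ a := by
        rw [← Nat.factorization_le_iff_dvd (by omega) (by omega), Finsupp.le_def]
        intro r
        by_cases h0 : a'.factorization r = 0
        · simp [h0]
        rcases eq_or_ne r q' with hrq | hrq
        · rw [hrq, hfa'_q, ha_fac q', if_pos (by omega)]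
          omega
        · have hfr : a'.factorization r = s'.factorization r := by
            rw [ha'_fac r, if_neg (fun hh => hrq hh.symm), zero_add]
          have hsr : s'.factorization r ≠ 0 := by rw [hfr] at h0; exact h0
          have hrp := (hs'_fac r hsr).2
          have hcr : c.factorization r = 0 := by
            by_contra h
            exact absurd (hc_small r h).1 (by omega)
          have hE := E2 r (by omega)
          omega
      have hane : a' ≠ a := by
        intro h
        have h1 : a'.factorization p = 0 := by
          have hs0 : s'.factorization p = 0 := by
            by_contra hh
            exact absurd (hs'_fac p hh).2 (by omega)
          rw [ha'_fac p, if_neg (by omega), hs0]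
        have h2 : a.factorization p ≠ 0 := by
          have hh : a.factorization p = s.factorization p := by
            rw [ha_fac p, if_neg (by omega), zero_add]
          omega
        rw [h] at h1
        exact h2 h1
      exact hprim a' ha' a ha hane hdvd
  · -- CASE q < q'
    have E3 : ∀ r, r < q' → b.factorization r + a.factorization r + c.factorization r
        = a'.factorization r + c'.factorization r := by
      intro r hr
      have h1 := E r
      rw [hb'_small r hr] at h1
      omega
    have ha'q : a'.factorization q = s'.factorization q := by
      rw [ha'_fac q, if_neg (by omega), zero_add]
    -- first: p < p'
    have hpp : p < p' := by
      by_contra hcon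
      push_neg at hcon
      have hcq : c'.factorization q = 0 := by
        by_contra h
        have hlt := (hc'_small q h).2.2.2
        have hb1 : ((p':ℝ)) ^ ((1:ℝ)/Real.sqrt v) ≤ (p:ℝ) ^ ((1:ℝ)/Real.sqrt v) :=
          Real.rpow_le_rpow (by positivity) (by exact_mod_cast hcon) (by positivity)
        have h2 := hlt.trans_le (hb1.trans (rpow_sqrt_bound hv0 hv1 hpP.one_lt.le hpq).le)
        exact absurd h2 (lt_irrefl _)
      have h1 := E3 q hqlt
      rw [hfa_q, ha'q, hcq] at h1
      have h2 : s'.factorization q ≠ 0 := by omega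
      exact absurd (hs'_fac q h2).2 (by omega)
    rcases le_or_gt q p' with hqp' | hp'q
    · -- q ≤ p' : a ∣ a', a ≠ a'
      have hdvd : a ∣ a' := by
        rw [← Nat.factorization_le_iff_dvd (by omega) (by omega), Finsupp.le_def]
        intro r
        by_cases h0 : a.factorization r = 0
        · simp [h0]
        rcases eq_or_ne r q with hrq | hrq
        · have ha'q1 : 1 ≤ s'.factorization q := by
            rcases eq_or_lt_of_le hqp' with hqe2 | hql2
            · rw [hqe2]
              omega
            · have hcq : c'.factorization q = 0 := by
                by_contra h
                exact absurd (hc'_small q h).1 (by omega)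
              have h1 := E3 q hqlt
              rw [hfa_q, ha'q, hcq] at h1
              omega
          rw [hrq, hfa_q, ha'_fac q, if_neg (by omega)]
          omega
        · have hfr : a.factorization r = s.factorization r := by
            rw [ha_fac r, if_neg (fun hh => hrq hh.symm), zero_add]
          have hsr : s.factorization r ≠ 0 := by rw [hfr] at h0; exact h0
          have hrp := (hs_fac r hsr).2
          have hcr' : c'.factorization r = 0 := by
            by_contra h
            exact absurd (hc'_small r h).1 (by omega)
          have hE := E3 r (by omega)
          have hbr := hb_small r (by omega)
          omega
      have hane : a ≠ a' := by
        intro h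
        have h1 : a.factorization q' = 0 := by
          have hs0 : s.factorization q' = 0 := by
            by_contra hh
            exact absurd (hs_fac q' hh).2 (by omega)
          rw [ha_fac q', if_neg (by omega), hs0]
        rw [h, hfa'_q] at h1
        omega
      exact hprim a ha a' ha' hane hdvd
    · -- p' < q : real contradiction
      have hs'q : s'.factorization q = 0 := by
        by_contra h
        exact absurd (hs'_fac q h).2 (by omega)
      have hcq' : c'.factorization q ≠ 0 := by
        have h1 := E3 q hqlt
        rw [hfa_q, ha'q, hs'q] at h1
        omega
      have hqlt' : (q:ℝ) < (p':ℝ) ^ ((1:ℝ)/Real.sqrt v) := (hc'_small q hcq').2.2.2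
      have hcp' : c.factorization p' ≠ 0 := by
        have hE := E3 p' (by omega)
        have hbp' := hb_small p' (by omega)
        have hap' : a.factorization p' = 0 := by
          have hs0 : s.factorization p' = 0 := by
            by_contra hh
            exact absurd (hs_fac p' hh).2 (by omega)
          rw [ha_fac p', if_neg (by omega), hs0]
        have ha'p' : a'.factorization p' ≠ 0 := by
          have h2 : a'.factorization p' = s'.factorization p' := by
            rw [ha'_fac p', if_neg (by omega), zero_add]
          omega
        omega
      have hp'lt : (p':ℝ) < (p:ℝ) ^ ((1:ℝ)/Real.sqrt v) := (hc_small p' hcp').2.2.2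
      have hsv0 : 0 < Real.sqrt v := Real.sqrt_pos.mpr hv0
      have hsvm : Real.sqrt v * Real.sqrt v = v := Real.mul_self_sqrt hv0.le
      have h1 : (q:ℝ) ^ v < ((p':ℝ) ^ ((1:ℝ)/Real.sqrt v)) ^ v :=
        Real.rpow_lt_rpow (by positivity) hqlt' hv0
      have h2 : ((p':ℝ) ^ ((1:ℝ)/Real.sqrt v)) ^ v = (p':ℝ) ^ Real.sqrt v := by
        rw [← Real.rpow_mul (by positivity)]
        congr 1
        rw [← hsvm]
        field_simp
        rw [Real.sqrt_sq hsv0.le]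
      have h3 : (p':ℝ) ^ Real.sqrt v < ((p:ℝ) ^ ((1:ℝ)/Real.sqrt v)) ^ Real.sqrt v :=
        Real.rpow_lt_rpow (by positivity) hp'lt hsv0
      have h4 : ((p:ℝ) ^ ((1:ℝ)/Real.sqrt v)) ^ Real.sqrt v = (p:ℝ) := by
        rw [← Real.rpow_mul (by positivity), one_div, inv_mul_cancel₀ hsv0.ne', Real.rpow_one]
      rw [h2] at h1
      rw [h4] at h3
      linarith [hpq, h1, h3]

/-- Lemma 3.1: let `A` be a primitive set of composite numbers and `v ∈ (0,1)` with
`P(a)^{1+v} > a` for all `a ∈ A`. Then the sets `L_{ac}`, ranging over `a ∈ A` and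
`c ∈ C_a^v`, are pairwise disjoint. -/
theorem Lset_mul_disjoint (A : Set ℕ) (hA1 : ∀ a ∈ A, 1 < a)
    (hcomp : ∀ a ∈ A, ¬ a.Prime) (hprim : Primitive A)
    (v : ℝ) (hv : v ∈ Set.Ioo (0 : ℝ) 1)
    (hP : ∀ a ∈ A, (a : ℝ) < (P a : ℝ) ^ (1 + v))
    (a a' : ℕ) (ha : a ∈ A) (ha' : a' ∈ A)
    (c c' : ℕ) (hc : c ∈ Cset a v) (hc' : c' ∈ Cset a' v)
    (hne : (a, c) ≠ (a', c')) :
    Disjoint (Lset (a * c)) (Lset (a' * c')) := by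

  rw [Set.disjoint_left]
  intro n hn hn'
  rcases le_total (P a) (P a') with h | h
  · exact core hA1 hcomp hprim hv.1 hv.2 hP ha ha' hc hc' hne h hn hn'
  · exact core hA1 hcomp hprim hv.1 hv.2 hP ha' ha hc' hc (Ne.symm hne) h hn' hn
end
end

section
/- The supremum of the upper natural density d̄(A) = limsup_{x→∞} |A ∩ [1,x]|/x over all L-primitive sets A ⊆ ℤ_{>1} equals 1; that is, for every ε > 0 there exists an L-primitive set A with upper natural density d̄(A) > 1 − ε. -/
noncomputable section

set_option maxHeartbeats 1000000

/-- primorial-like: product of primes < t -/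
def Pi0 (t : ℕ) : ℕ := ∏ p ∈ t.primesBelow, p

def V0 (t : ℕ) : ℝ := ∏ p ∈ t.primesBelow, (1 - 1 / (p : ℝ))

lemma Pi0_pos (t : ℕ) : 0 < Pi0 t :=
  Finset.prod_pos fun p hp => (Nat.prime_of_mem_primesBelow hp).pos

lemma totient_prod_primes {s : Finset ℕ} (hs : ∀ p ∈ s, p.Prime) :
    Nat.totient (∏ p ∈ s, p) = ∏ p ∈ s, (p - 1) := by
  induction s using Finset.induction_on with
  | empty => simp
  | @insert a s ha ih =>
    have hap : a.Prime := hs a (Finset.mem_insert_self a s)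
    have hcop : Nat.Coprime a (∏ p ∈ s, p) := by
      apply Nat.Coprime.prod_right
      intro q hq
      exact (Nat.coprime_primes hap (hs q (Finset.mem_insert_of_mem hq))).mpr
        (fun h => ha (h ▸ hq))
    rw [Finset.prod_insert ha, Finset.prod_insert ha, Nat.totient_mul hcop,
      Nat.totient_prime hap, ih fun p hp => hs p (Finset.mem_insert_of_mem hp)]

lemma totient_Pi0 (t : ℕ) : ((Pi0 t).totient : ℝ) = (Pi0 t : ℝ) * V0 t := by
  rw [Pi0, totient_prod_primes fun p hp => Nat.prime_of_mem_primesBelow hp]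
  push_cast [Nat.cast_prod]
  rw [V0, ← Finset.prod_mul_distrib]
  apply Finset.prod_congr rfl
  intro p hp
  have h2 : (2 : ℝ) ≤ p := by exact_mod_cast (Nat.prime_of_mem_primesBelow hp).two_le
  have hp0 : (p : ℝ) ≠ 0 := by linarith
  rw [Nat.cast_sub (Nat.prime_of_mem_primesBelow hp).one_le]
  field_simp
  simp

lemma V0_nonneg (t : ℕ) : 0 ≤ V0 t := by
  apply Finset.prod_nonneg
  intro p hp
  have h2 : (2 : ℝ) ≤ p := by exact_mod_cast (Nat.prime_of_mem_primesBelow hp).two_le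
  have : 1 / (p:ℝ) ≤ 1/2 := by
    apply one_div_le_one_div_of_le <;> linarith
  linarith

lemma V0_le_one (t : ℕ) : V0 t ≤ 1 := by
  apply Finset.prod_le_one
  · intro p hp
    have h2 : (2 : ℝ) ≤ p := by exact_mod_cast (Nat.prime_of_mem_primesBelow hp).two_le
    have : 1 / (p:ℝ) ≤ 1/2 := by apply one_div_le_one_div_of_le <;> linarith
    linarith
  · intro p hp
    have h2 : (2 : ℝ) ≤ p := by exact_mod_cast (Nat.prime_of_mem_primesBelow hp).two_le
    have : 0 < 1 / (p:ℝ) := by positivity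
    linarith

lemma V0_mono {s t : ℕ} (h : s ≤ t) : V0 t ≤ V0 s := by
  have hsub : s.primesBelow ⊆ t.primesBelow := by
    intro p hp
    rw [Nat.mem_primesBelow] at hp ⊢
    exact ⟨hp.1.trans_le h, hp.2⟩
  rw [V0, ← Finset.prod_sdiff hsub]
  have h1 : ∏ p ∈ t.primesBelow \ s.primesBelow, (1 - 1/(p:ℝ)) ≤ 1 := by
    apply Finset.prod_le_one
    · intro p hp
      have h2 : (2 : ℝ) ≤ p := by
        exact_mod_cast (Nat.prime_of_mem_primesBelow (Finset.mem_sdiff.mp hp).1).two_le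
      have : 1 / (p:ℝ) ≤ 1/2 := by apply one_div_le_one_div_of_le <;> linarith
      linarith
    · intro p hp
      have h2 : (2 : ℝ) ≤ p := by
        exact_mod_cast (Nat.prime_of_mem_primesBelow (Finset.mem_sdiff.mp hp).1).two_le
      have : 0 < 1 / (p:ℝ) := by positivity
      linarith
  have h0 : 0 ≤ V0 s := V0_nonneg s
  calc (∏ p ∈ t.primesBelow \ s.primesBelow, (1 - 1/(p:ℝ))) * V0 s
      ≤ 1 * V0 s := mul_le_mul_of_nonneg_right h1 h0
    _ = V0 s := one_mul _

lemma V0_le_exp (t : ℕ) : V0 t ≤ Real.exp (-∑ p ∈ t.primesBelow, (1/p : ℝ)) := by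
  rw [← Finset.sum_neg_distrib, Real.exp_sum]
  apply Finset.prod_le_prod
  · intro p hp
    have h2 : (2 : ℝ) ≤ p := by exact_mod_cast (Nat.prime_of_mem_primesBelow hp).two_le
    have : 1 / (p:ℝ) ≤ 1/2 := by apply one_div_le_one_div_of_le <;> linarith
    linarith
  · intro p _
    have := Real.add_one_le_exp (-(1/p : ℝ))
    linarith

lemma sum_primes_tendsto :
    Filter.Tendsto (fun t : ℕ => ∑ p ∈ t.primesBelow, (1/p : ℝ)) Filter.atTop Filter.atTop := by
  have hnn : ∀ n, 0 ≤ Set.indicator {p | Nat.Prime p} (fun n : ℕ => (1:ℝ)/n) n := by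
    intro n
    apply Set.indicator_nonneg
    intro p _
    positivity
  have h := (not_summable_iff_tendsto_nat_atTop_of_nonneg hnn).mp not_summable_one_div_on_primes
  have key : (fun t : ℕ => ∑ p ∈ t.primesBelow, (1/p : ℝ)) =
      fun n => ∑ i ∈ Finset.range n, Set.indicator {p | Nat.Prime p} (fun n : ℕ => (1:ℝ)/n) i := by
    funext t
    rw [Nat.primesBelow, Finset.sum_filter]
    apply Finset.sum_congr rfl
    intro n _
    by_cases h : n.Prime
    · simp [h, Set.indicator_of_mem, Set.mem_setOf_eq]
    · simp [h, Set.indicator_of_notMem]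
  rw [key]
  exact h

lemma V0_small (c : ℝ) (hc : 0 < c) (n₀ : ℕ) : ∃ t, n₀ < t ∧ V0 t < c := by
  have h := Filter.tendsto_atTop.mp sum_primes_tendsto (-Real.log c + 1)
  rw [Filter.eventually_atTop] at h
  obtain ⟨t₀, ht₀⟩ := h
  refine ⟨max t₀ (n₀+1), lt_of_lt_of_le (Nat.lt_succ_self n₀) (le_max_right _ _), ?_⟩
  have hS := ht₀ (max t₀ (n₀+1)) (le_max_left _ _)
  calc V0 (max t₀ (n₀+1)) ≤ Real.exp (-∑ p ∈ (max t₀ (n₀+1)).primesBelow, (1/p:ℝ)) :=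
        V0_le_exp _
    _ < Real.exp (Real.log c) := by
        apply Real.exp_lt_exp.mpr
        linarith
    _ = c := Real.exp_log hc

open Classical Finset in
lemma Lset_count (a N : ℕ) (ha : 0 < a) :
    (((Finset.Ioc 0 N).filter (· ∈ Lset a)).card : ℝ) ≤ (N : ℝ) / a * V0 (P a) + Pi0 (P a) := by
  set PP := Pi0 (P a) with hPP
  set M := N / a with hM
  have hsub : (Finset.Ioc 0 N).filter (· ∈ Lset a) ⊆
      ((Finset.Ico 1 (1 + M)).filter (fun b => Nat.Coprime PP b)).image (· * a) := by
    intro n hn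
    rw [Finset.mem_filter, Finset.mem_Ioc] at hn
    obtain ⟨⟨hn0, hnN⟩, b, hb0, hba, hbp⟩ := hn
    rw [Finset.mem_image]
    refine ⟨b, ?_, by omega⟩
    rw [Finset.mem_filter, Finset.mem_Ico]
    refine ⟨⟨hb0, ?_⟩, ?_⟩
    · have : b * a ≤ N := by omega
      have : b ≤ N / a := Nat.le_div_iff_mul_le ha |>.mpr this
      omega
    · by_contra hcop
      obtain ⟨p, hp, hpPP, hpb⟩ := Nat.Prime.not_coprime_iff_dvd.mp hcop
      have hmem : p ∈ (P a).primesBelow := by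
        have := (Prime.dvd_finset_prod_iff hp.prime _).mp hpPP
        obtain ⟨q, hq, hpq⟩ := this
        have := (Nat.prime_of_mem_primesBelow hq)
        rwa [(Nat.prime_dvd_prime_iff_eq hp this).mp hpq]
      have hlt : p < P a := Nat.lt_of_mem_primesBelow hmem
      exact absurd (hbp p hp hpb) (by omega)
  have hcard : ((Finset.Ioc 0 N).filter (· ∈ Lset a)).card ≤
      PP.totient * (M / PP + 1) := by
    calc ((Finset.Ioc 0 N).filter (· ∈ Lset a)).card
        ≤ (((Finset.Ico 1 (1 + M)).filter (fun b => Nat.Coprime PP b)).image (· * a)).card :=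
          Finset.card_le_card hsub
      _ ≤ ((Finset.Ico 1 (1 + M)).filter (fun b => Nat.Coprime PP b)).card :=
          Finset.card_image_le
      _ ≤ PP.totient * (M / PP + 1) := Nat.Ico_filter_coprime_le 1 M (Pi0_pos _).ne'
  have h1 : ((PP.totient * (M / PP + 1) : ℕ) : ℝ) ≤ (M : ℝ) * V0 (P a) + PP := by
    push_cast
    have hdiv : ((M / PP : ℕ) : ℝ) ≤ (M : ℝ) / PP := Nat.cast_div_le
    have htot : (PP.totient : ℝ) = (PP : ℝ) * V0 (P a) := totient_Pi0 _
    have hPPpos : (0:ℝ) < PP := by exact_mod_cast Pi0_pos _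
    have htle : (PP.totient : ℝ) ≤ PP := by exact_mod_cast Nat.totient_le PP
    have hV : 0 ≤ V0 (P a) := V0_nonneg _
    have h2 : (PP.totient : ℝ) * ((M / PP : ℕ) : ℝ) ≤ (PP * V0 (P a)) * ((M:ℝ) / PP) := by
      rw [← htot]
      apply mul_le_mul_of_nonneg_left hdiv (by positivity)
    have h3 : (PP * V0 (P a)) * ((M:ℝ) / PP) = (M:ℝ) * V0 (P a) := by
      field_simp
    nlinarith [h2, h3]
  have hMr : (M : ℝ) ≤ (N : ℝ) / a := by
    rw [hM]
    have := Nat.cast_div_le (m := N) (n := a) (α := ℝ)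
    exact this
  calc (((Finset.Ioc 0 N).filter (· ∈ Lset a)).card : ℝ)
      ≤ ((PP.totient * (M / PP + 1) : ℕ) : ℝ) := by exact_mod_cast hcard
    _ ≤ (M : ℝ) * V0 (P a) + PP := h1
    _ ≤ (N : ℝ) / a * V0 (P a) + PP := by
        have := mul_le_mul_of_nonneg_right hMr (V0_nonneg (P a))
        linarith

open Classical in
lemma smooth_count (q : ℕ) (δ : ℝ) (hδ : 0 < δ) :
    ∀ᶠ N : ℕ in Filter.atTop,
      (((Finset.Ioc 0 N).filter (fun n => P n ≤ q)).card : ℝ) ≤ δ * N := by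
  set C : ℕ := 2 ^ (q+1).primesBelow.card with hC
  have hsub : ∀ N, (Finset.Ioc 0 N).filter (fun n => P n ≤ q) ⊆
      Nat.smoothNumbersUpTo N (q+1) := by
    intro N n hn
    rw [Finset.mem_filter, Finset.mem_Ioc] at hn
    obtain ⟨⟨hn0, hnN⟩, hP⟩ := hn
    rw [Nat.mem_smoothNumbersUpTo]
    refine ⟨hnN, Nat.mem_smoothNumbers'.mpr fun p hp hpn => ?_⟩
    have hmem : p ∈ n.primeFactors := Nat.mem_primeFactors.mpr ⟨hp, hpn, by omega⟩
    have : p ≤ P n := Finset.le_sup (f := id) hmem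
    omega
  rw [Filter.eventually_atTop]
  refine ⟨(⌈(C : ℝ)/δ⌉₊ + 1)^2, fun N hN => ?_⟩
  have hs : ⌈(C : ℝ)/δ⌉₊ + 1 ≤ Nat.sqrt N := by
    rw [Nat.le_sqrt]
    calc (⌈(C : ℝ)/δ⌉₊ + 1) * (⌈(C : ℝ)/δ⌉₊ + 1) = (⌈(C : ℝ)/δ⌉₊ + 1)^2 := by ring
      _ ≤ N := hN
  have hCs : (C : ℝ) ≤ δ * Nat.sqrt N := by
    have h1 : (C : ℝ)/δ ≤ ⌈(C : ℝ)/δ⌉₊ := Nat.le_ceil _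
    have h2 : ((⌈(C : ℝ)/δ⌉₊ : ℝ) + 1) ≤ (Nat.sqrt N : ℝ) := by exact_mod_cast hs
    have := div_le_iff₀ hδ |>.mp (by linarith : (C : ℝ)/δ ≤ (Nat.sqrt N : ℝ))
    linarith [this]
  have hss : ((Nat.sqrt N : ℝ)) * (Nat.sqrt N : ℝ) ≤ (N : ℝ) := by
    exact_mod_cast Nat.sqrt_le N
  have hsqnn : (0:ℝ) ≤ (Nat.sqrt N : ℝ) := Nat.cast_nonneg _
  calc (((Finset.Ioc 0 N).filter (fun n => P n ≤ q)).card : ℝ)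
      ≤ ((Nat.smoothNumbersUpTo N (q+1)).card : ℝ) := by
        exact_mod_cast Finset.card_le_card (hsub N)
    _ ≤ (C : ℝ) * Nat.sqrt N := by exact_mod_cast Nat.smoothNumbersUpTo_card_le N (q+1)
    _ ≤ (δ * Nat.sqrt N) * Nat.sqrt N := mul_le_mul_of_nonneg_right hCs hsqnn
    _ = δ * ((Nat.sqrt N : ℝ) * Nat.sqrt N) := by ring
    _ ≤ δ * N := mul_le_mul_of_nonneg_left hss hδ.le

open Classical Finset Filter in
lemma key_step (δ : ℝ) (hδ : 0 < δ) (hδ8 : δ ≤ 1/8)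
    (F : Finset ℕ) (hF1 : ∀ a ∈ F, 1 < a)
    (hFprim : LPrimitive ↑F)
    (hFsum : ∑ a ∈ F, V0 (P a) / a ≤ δ)
    (n₀ : ℕ) (hn₀ : 1 ≤ n₀) (hFn₀ : ∀ a ∈ F, a ≤ n₀)
    (θ : ℝ) (hθ : 0 < θ) :
    ∃ N G, n₀ < N ∧
      (∀ a ∈ G, n₀ < a ∧ a ≤ N) ∧
      LPrimitive ↑(F ∪ G) ∧
      (∑ a ∈ G, V0 (P a) / a ≤ θ) ∧
      (1 - 6*δ) * N ≤ (G.card : ℝ) := by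
  -- choose the threshold q
  obtain ⟨q, hq1, hq2⟩ := V0_small (min (θ*δ/4) δ) (by positivity) (max n₀ ⌈2/δ⌉₊)
  have hqδ : (2:ℝ)/δ ≤ q := by
    have : (⌈2/δ⌉₊ : ℝ) ≤ q := by
      have := le_max_right n₀ ⌈2/δ⌉₊
      exact_mod_cast le_of_lt (lt_of_le_of_lt this hq1)
    calc (2:ℝ)/δ ≤ ⌈2/δ⌉₊ := Nat.le_ceil _
      _ ≤ q := this
  have hq0 : 1 ≤ q := le_trans (le_trans hn₀ (le_max_left _ _)) hq1.le
  -- the constant from the sieve errors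
  set CF : ℝ := ∑ a ∈ F, (Pi0 (P a) : ℝ) with hCF
  have hCF0 : 0 ≤ CF := Finset.sum_nonneg fun a _ => by positivity
  -- choose N
  have hev : ∀ᶠ N : ℕ in atTop,
      ((((Finset.Ioc 0 N).filter (fun n => P n ≤ q)).card : ℝ) ≤ δ * N ∧
        CF ≤ δ * N) ∧ ((n₀:ℝ) + 2 ≤ δ * N ∧ n₀ < N) := by
    refine ((smooth_count q δ hδ).and ?_).and (Filter.Eventually.and ?_ ?_)
    · have h := tendsto_natCast_atTop_atTop (R := ℝ)
      have := (tendsto_const_mul_atTop_of_pos hδ).mpr h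
      exact (this.eventually_ge_atTop CF)
    · have h := tendsto_natCast_atTop_atTop (R := ℝ)
      have := (tendsto_const_mul_atTop_of_pos hδ).mpr h
      exact (this.eventually_ge_atTop ((n₀:ℝ)+2))
    · exact eventually_gt_atTop n₀
  obtain ⟨N, ⟨hsmooth, hCFN⟩, hδN, hn₀N⟩ := hev.exists
  set m : ℕ := ⌊δ * N⌋₊ with hm
  have hNpos : 0 < N := lt_of_le_of_lt (Nat.zero_le _) hn₀N
  have hmle : (m : ℝ) ≤ δ * N := Nat.floor_le (by positivity)
  have hmgt : δ * N - 1 < (m : ℝ) := by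
    have := Nat.lt_floor_add_one (δ * N)
    linarith
  have hmn₀ : n₀ < m := by
    have h : (n₀ : ℝ) < m := by linarith
    exact_mod_cast h
  have hmN : m < N := by
    have : (m:ℝ) ≤ δ * N := hmle
    have h8 : δ * N ≤ N/8 := by
      have : (0:ℝ) ≤ N := Nat.cast_nonneg _
      nlinarith
    have : (m:ℝ) < N := by
      have hN1 : (1:ℝ) ≤ N := by exact_mod_cast hNpos
      linarith
    exact_mod_cast this
  have hqm : N ≤ q * m := by
    have hq' : (2:ℝ)/δ ≤ q := hqδ
    have hm' : δ * N - 1 < m := hmgt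
    have hδN2 : (2:ℝ) ≤ δ * N := by
      have : (0:ℝ) ≤ n₀ := Nat.cast_nonneg _
      linarith
    have : (N : ℝ) ≤ (q:ℝ) * m := by
      have hq0' : (0:ℝ) < q := by
        have : (0:ℝ) < 2/δ := by positivity
        linarith
      have h1 : (2/δ) * (δ*N - 1) ≤ (q:ℝ) * m :=
        mul_le_mul hq' (le_of_lt hm') (by linarith) (le_of_lt hq0')
      have h2 : (2/δ) * (δ*N - 1) = 2*N - 2/δ := by
        field_simp
      have h3 : 2/δ ≤ (N:ℝ) := by
        rw [div_le_iff₀ hδ]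
        nlinarith
      linarith
    exact_mod_cast this
  -- define G
  set G : Finset ℕ := (Finset.Ioc m N).filter
      (fun n => q ≤ P n ∧ ∀ a ∈ F, n ∉ Lset a) with hGdef
  have hGmem : ∀ a ∈ G, (m < a ∧ a ≤ N) ∧ q ≤ P a ∧ ∀ x ∈ F, a ∉ Lset x := by
    intro a ha
    rw [hGdef, Finset.mem_filter, Finset.mem_Ioc] at ha
    exact ha
  refine ⟨N, G, hn₀N, ?_, ?_, ?_, ?_⟩
  · intro a ha
    obtain ⟨⟨h1, h2⟩, _⟩ := hGmem a ha
    exact ⟨lt_trans hmn₀ h1, h2⟩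
  · -- L-primitivity
    intro a ha a' ha' hne hLa
    rw [Finset.coe_union, Set.mem_union] at ha ha'
    rcases ha' with ha' | ha'
    · -- a' ∈ F
      rcases ha with ha | ha
      · exact hFprim a ha a' ha' hne hLa
      · -- a ∈ G, a' ∈ F : a' < a but a' is a multiple of a
        obtain ⟨b, hb0, hba, _⟩ := hLa
        have h1 : a ≤ a' := by
          rw [hba]
          calc a = 1 * a := (one_mul a).symm
            _ ≤ b * a := Nat.mul_le_mul_right a hb0
        have h2 : a' ≤ n₀ := hFn₀ a' ha'
        have h3 : m < a := (hGmem a ha).1.1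
        omega
    · -- a' ∈ G
      rcases ha with ha | ha
      · exact (hGmem a' ha').2.2 a ha hLa
      · -- both in G
        obtain ⟨b, hb0, hba, hbp⟩ := hLa
        have hb1 : b ≠ 1 := by
          intro h
          rw [h, one_mul] at hba
          exact hne hba.symm
        obtain ⟨p, hp, hpb⟩ := Nat.exists_prime_and_dvd hb1
        have hPa : q ≤ P a := (hGmem a ha).2.1
        have hqb : q ≤ b := le_trans (le_trans hPa (hbp p hp hpb)) (Nat.le_of_dvd hb0 hpb)
        have hma : m + 1 ≤ a := (hGmem a ha).1.1
        have ha'N : a' ≤ N := (hGmem a' ha').1.2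
        have : q * (m+1) ≤ b * a := Nat.mul_le_mul hqb hma
        have : N + 1 ≤ b * a := by
          calc N + 1 ≤ q * m + q := by omega
            _ = q * (m+1) := by ring
            _ ≤ b * a := this
        omega
  · -- sum bound
    have hVq : V0 q ≤ θ * δ / 4 := le_trans hq2.le (min_le_left _ _)
    have hVq0 : 0 ≤ V0 q := V0_nonneg q
    have hm0 : (0:ℝ) < m := by
      have : 0 < m := lt_of_le_of_lt (Nat.zero_le n₀) hmn₀
      exact_mod_cast this
    have hterm : ∀ a ∈ G, V0 (P a) / a ≤ V0 q / m := by
      intro a ha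
      have h1 : V0 (P a) ≤ V0 q := V0_mono (hGmem a ha).2.1
      have h2 : (m:ℝ) ≤ a := by exact_mod_cast le_of_lt (hGmem a ha).1.1
      have ha0 : (0:ℝ) < a := lt_of_lt_of_le hm0 h2
      exact div_le_div₀ (by positivity) h1 hm0 h2
    have hsum : ∑ a ∈ G, V0 (P a) / a ≤ (G.card : ℝ) * (V0 q / m) := by
      calc ∑ a ∈ G, V0 (P a) / a ≤ ∑ _a ∈ G, (V0 q / m) := Finset.sum_le_sum hterm
        _ = (G.card : ℝ) * (V0 q / m) := by rw [Finset.sum_const, nsmul_eq_mul]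
    have hcard : (G.card : ℝ) ≤ N := by
      have h1 : G.card ≤ (Finset.Ioc m N).card := Finset.card_filter_le _ _
      have h2 : (Finset.Ioc m N).card = N - m := Nat.card_Ioc m N
      have : G.card ≤ N := by omega
      exact_mod_cast this
    have hδN2 : (2:ℝ) ≤ δ * N := by
      have : (0:ℝ) ≤ n₀ := Nat.cast_nonneg _
      linarith
    have hm2 : δ * N / 2 ≤ (m:ℝ) := by linarith
    have hNm : (N:ℝ) * (V0 q / m) ≤ (2/δ) * V0 q := by
      have h1 : (N:ℝ) * (V0 q / m) = N * V0 q / m := by ring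
      have h2 : (2:ℝ)/δ * V0 q = 2 * V0 q / δ := by ring
      rw [h1, h2, div_le_div_iff₀ hm0 hδ]
      nlinarith [mul_le_mul_of_nonneg_left hm2 hVq0]
    have hNV : (G.card : ℝ) * (V0 q / m) ≤ (N:ℝ) * (V0 q / m) :=
      mul_le_mul_of_nonneg_right hcard (by positivity)
    have hfin : (2/δ) * V0 q ≤ θ/2 := by
      calc (2/δ) * V0 q ≤ (2/δ) * (θ*δ/4) := by
            apply mul_le_mul_of_nonneg_left hVq (by positivity)
        _ = θ/2 := by field_simp; ring
    linarith
  · -- cardinality bound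
    have hBad : ∀ n ∈ Finset.Ioc m N, ¬(q ≤ P n ∧ ∀ a ∈ F, n ∉ Lset a) →
        n ∈ (Finset.Ioc 0 N).filter (fun n => P n ≤ q) ∪
          F.biUnion (fun a => (Finset.Ioc 0 N).filter (· ∈ Lset a)) := by
      intro n hn hcond
      rw [Finset.mem_Ioc] at hn
      push_neg at hcond
      rw [Finset.mem_union]
      by_cases hq' : q ≤ P n
      · obtain ⟨a, haF, haL⟩ := hcond hq'
        right
        rw [Finset.mem_biUnion]
        exact ⟨a, haF, Finset.mem_filter.mpr ⟨Finset.mem_Ioc.mpr ⟨by omega, hn.2⟩, haL⟩⟩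
      · left
        exact Finset.mem_filter.mpr ⟨Finset.mem_Ioc.mpr ⟨by omega, hn.2⟩, by omega⟩
    set Bad := (Finset.Ioc m N).filter
        (fun n => ¬(q ≤ P n ∧ ∀ a ∈ F, n ∉ Lset a)) with hBadDef
    have hsplit : G.card + Bad.card = N - m := by
      rw [hGdef, hBadDef, Finset.card_filter_add_card_filter_not, Nat.card_Ioc]
    have hBadSub : Bad ⊆ (Finset.Ioc 0 N).filter (fun n => P n ≤ q) ∪
        F.biUnion (fun a => (Finset.Ioc 0 N).filter (· ∈ Lset a)) := by
      intro n hn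
      rw [hBadDef, Finset.mem_filter] at hn
      exact hBad n hn.1 hn.2
    have hBadCard : (Bad.card : ℝ) ≤ δ * N + (δ * N + δ * N) := by
      have h1 : Bad.card ≤ ((Finset.Ioc 0 N).filter (fun n => P n ≤ q)).card +
          (F.biUnion (fun a => (Finset.Ioc 0 N).filter (· ∈ Lset a))).card := by
        calc Bad.card ≤ _ := Finset.card_le_card hBadSub
          _ ≤ _ := Finset.card_union_le _ _
      have h2 : (F.biUnion (fun a => (Finset.Ioc 0 N).filter (· ∈ Lset a))).card ≤
          ∑ a ∈ F, ((Finset.Ioc 0 N).filter (· ∈ Lset a)).card :=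
        Finset.card_biUnion_le
      have h3 : (∑ a ∈ F, (((Finset.Ioc 0 N).filter (· ∈ Lset a)).card : ℝ)) ≤
          δ * N + δ * N := by
        calc ∑ a ∈ F, (((Finset.Ioc 0 N).filter (· ∈ Lset a)).card : ℝ)
            ≤ ∑ a ∈ F, ((N : ℝ) / a * V0 (P a) + Pi0 (P a)) := by
              apply Finset.sum_le_sum
              intro a haF
              exact Lset_count a N (by have := hF1 a haF; omega)
          _ = (N:ℝ) * (∑ a ∈ F, V0 (P a) / a) + CF := by
              rw [Finset.sum_add_distrib, Finset.mul_sum]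
              congr 1
              apply Finset.sum_congr rfl
              intro a _
              ring
          _ ≤ δ * N + δ * N := by
              have hN0 : (0:ℝ) ≤ N := Nat.cast_nonneg _
              have := mul_le_mul_of_nonneg_left hFsum hN0
              linarith [hCFN]
      have h1' : (Bad.card : ℝ) ≤ (((Finset.Ioc 0 N).filter (fun n => P n ≤ q)).card : ℝ) +
          ((F.biUnion (fun a => (Finset.Ioc 0 N).filter (· ∈ Lset a))).card : ℝ) := by
        exact_mod_cast h1
      have h2' : ((F.biUnion (fun a => (Finset.Ioc 0 N).filter (· ∈ Lset a))).card : ℝ) ≤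
          ∑ a ∈ F, (((Finset.Ioc 0 N).filter (· ∈ Lset a)).card : ℝ) := by
        have := (Nat.cast_le (α := ℝ)).mpr h2
        rwa [Nat.cast_sum] at this
      linarith [hsmooth, h3]
    have hGcard : ((N : ℝ) - m) - Bad.card ≤ (G.card : ℝ) := by
      have hmN' : m ≤ N := le_of_lt hmN
      have : (G.card : ℝ) + Bad.card = (N:ℝ) - m := by
        have := hsplit
        have hc : ((G.card + Bad.card : ℕ) : ℝ) = ((N - m : ℕ) : ℝ) := by exact_mod_cast this
        push_cast [Nat.cast_sub hmN'] at hc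
        linarith
      linarith
    have : (1 - 6*δ) * N ≤ ((N : ℝ) - m) - Bad.card := by
      have hN0 : (0:ℝ) ≤ N := Nat.cast_nonneg _
      nlinarith [hmle, hBadCard]
    linarith

/-- invariant for the recursive construction -/
def LPInv (δ : ℝ) (k : ℕ) (s : Finset ℕ × ℕ) : Prop :=
  (∀ a ∈ s.1, 1 < a ∧ a ≤ s.2) ∧ 1 ≤ s.2 ∧ LPrimitive ↑s.1 ∧
    ∑ a ∈ s.1, V0 (P a) / a ≤ δ * (1 - (1/2)^k)

lemma step_ex (δ : ℝ) (hδ : 0 < δ) (hδ8 : δ ≤ 1/8) (k : ℕ) (s : Finset ℕ × ℕ)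
    (h : LPInv δ k s) :
    ∃ s' : Finset ℕ × ℕ, LPInv δ (k+1) s' ∧ s.1 ⊆ s'.1 ∧ s.2 < s'.2 ∧
      (∀ a ∈ s'.1, a ∉ s.1 → s.2 < a) ∧ (1 - 6*δ) * s'.2 ≤ (s'.1.card : ℝ) := by
  obtain ⟨h1, h2, h3, h4⟩ := h
  have hθ : (0:ℝ) < δ * (1/2)^(k+1) := by positivity
  have hsum : ∑ a ∈ s.1, V0 (P a) / a ≤ δ := by
    have : δ * (1 - (1/2)^k) ≤ δ := by
      have : (0:ℝ) ≤ (1/2:ℝ)^k := by positivity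
      nlinarith
    linarith
  obtain ⟨N, G, hN, hG, hprim, hGsum, hcard⟩ :=
    key_step δ hδ hδ8 s.1 (fun a ha => (h1 a ha).1) h3 hsum s.2 h2
      (fun a ha => (h1 a ha).2) (δ * (1/2)^(k+1)) hθ
  have hdisj : Disjoint s.1 G := by
    rw [Finset.disjoint_left]
    intro a ha haG
    have := (h1 a ha).2
    have := (hG a haG).1
    omega
  refine ⟨(s.1 ∪ G, N), ⟨?_, by omega, hprim, ?_⟩, Finset.subset_union_left, hN, ?_, ?_⟩
  · intro a ha
    rcases Finset.mem_union.mp ha with ha | ha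
    · exact ⟨(h1 a ha).1, le_trans (h1 a ha).2 (le_of_lt hN)⟩
    · exact ⟨by have := (hG a ha).1; omega, (hG a ha).2⟩
  · rw [Finset.sum_union hdisj]
    have : δ * (1 - (1/2)^k) + δ * (1/2)^(k+1) = δ * (1 - (1/2)^(k+1)) := by
      ring
    linarith
  · intro a ha hnotin
    rcases Finset.mem_union.mp ha with ha | ha
    · exact absurd ha hnotin
    · exact (hG a ha).1
  · calc (1 - 6*δ) * N ≤ (G.card : ℝ) := hcard
      _ ≤ ((s.1 ∪ G).card : ℝ) := by
          exact_mod_cast Finset.card_le_card Finset.subset_union_right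

/-- the recursively constructed sequence of states -/
def seqAux (δ : ℝ) (hδ : 0 < δ) (hδ8 : δ ≤ 1/8) : ∀ k : ℕ, {s : Finset ℕ × ℕ // LPInv δ k s}
  | 0 => ⟨(∅, 1), by
      refine ⟨by simp, le_refl 1, ?_, by simp [hδ.le]⟩
      intro a ha
      simp at ha⟩
  | (k+1) =>
      ⟨Classical.choose (step_ex δ hδ hδ8 k (seqAux δ hδ hδ8 k).1 (seqAux δ hδ hδ8 k).2),
       (Classical.choose_spec (step_ex δ hδ hδ8 k (seqAux δ hδ hδ8 k).1
          (seqAux δ hδ hδ8 k).2)).1⟩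

lemma seqAux_spec (δ : ℝ) (hδ : 0 < δ) (hδ8 : δ ≤ 1/8) (k : ℕ) :
    (seqAux δ hδ hδ8 k).1.1 ⊆ (seqAux δ hδ hδ8 (k+1)).1.1 ∧
    (seqAux δ hδ hδ8 k).1.2 < (seqAux δ hδ hδ8 (k+1)).1.2 ∧
    (∀ a ∈ (seqAux δ hδ hδ8 (k+1)).1.1, a ∉ (seqAux δ hδ hδ8 k).1.1 →
      (seqAux δ hδ hδ8 k).1.2 < a) ∧
    (1 - 6*δ) * (seqAux δ hδ hδ8 (k+1)).1.2 ≤ ((seqAux δ hδ hδ8 (k+1)).1.1.card : ℝ) := by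
  have := (Classical.choose_spec (step_ex δ hδ hδ8 k (seqAux δ hδ hδ8 k).1
    (seqAux δ hδ hδ8 k).2)).2
  exact this

open Filter in
/-- Proposition 5.2 (Besicovitch-type result): the supremum of the upper natural
density over all L-primitive sets equals 1; i.e., for every `ε > 0` there is an
L-primitive set of upper natural density exceeding `1 - ε`. -/
theorem LPrimitive_upper_density_sup_one :
    ∀ ε > (0 : ℝ), ∃ A : Set ℕ, (∀ a ∈ A, 1 < a) ∧ LPrimitive A ∧
      1 - ε < Filter.limsup
        (fun x : ℝ => (1 / x) *
          ∑ n ∈ Finset.range (⌊x⌋₊ + 1), Set.indicator A (fun _ => (1 : ℝ)) n)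
        Filter.atTop := by
  intro ε hε
  set ε' : ℝ := min ε (1/2) with hε'def
  have hε'pos : 0 < ε' := lt_min hε (by norm_num)
  have hε'le : ε' ≤ 1/2 := min_le_right _ _
  set δ : ℝ := ε' / 8 with hδdef
  have hδ : 0 < δ := by positivity
  have hδ8 : δ ≤ 1/8 := by
    rw [hδdef]
    linarith
  set Fk : ℕ → Finset ℕ := fun k => (seqAux δ hδ hδ8 k).1.1 with hFk
  set Nk : ℕ → ℕ := fun k => (seqAux δ hδ hδ8 k).1.2 with hNk
  have hInv : ∀ k, LPInv δ k (Fk k, Nk k) := fun k => (seqAux δ hδ hδ8 k).2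
  have hspec := seqAux_spec δ hδ hδ8
  have hNmono : StrictMono Nk := strictMono_nat_of_lt_succ (fun k => (hspec k).2.1)
  have hNge : ∀ k, k ≤ Nk k := fun k => hNmono.le_apply
  have hFmono : ∀ j k, j ≤ k → Fk j ⊆ Fk k := by
    intro j k hjk
    induction k, hjk using Nat.le_induction with
    | base => exact subset_rfl
    | succ k hjk ih => exact ih.trans (hspec k).1
  set A : Set ℕ := {n : ℕ | ∃ k, n ∈ Fk k} with hA
  have hmem_le : ∀ k n, n ∈ A → n ≤ Nk k → n ∈ Fk k := by
    intro k n hn hle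
    obtain ⟨j, hj⟩ := hn
    rcases le_or_gt j k with h | h
    · exact hFmono j k h hj
    · -- induction down from j to k
      have claim : ∀ j, k ≤ j → n ∈ Fk j → n ∈ Fk k := by
        intro j hkj
        induction j, hkj using Nat.le_induction with
        | base => exact id
        | succ j hkj ih =>
          intro hnj
          by_cases hcase : n ∈ Fk j
          · exact ih hcase
          · have h1 : Nk j < n := (hspec j).2.2.1 n hnj hcase
            have h2 : Nk k ≤ Nk j := hNmono.monotone hkj
            omega
      exact claim j (le_of_lt h) hj
  refine ⟨A, ?_, ?_, ?_⟩
  · rintro a ⟨k, hk⟩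
    exact ((hInv k).1 a hk).1
  · -- LPrimitive A
    rintro a ⟨j, hj⟩ a' ⟨j', hj'⟩ hne
    have h1 : a ∈ Fk (max j j') := hFmono j _ (le_max_left _ _) hj
    have h2 : a' ∈ Fk (max j j') := hFmono j' _ (le_max_right _ _) hj'
    exact (hInv (max j j')).2.2.1 a h1 a' h2 hne
  · -- limsup bound
    set g : ℝ → ℝ := fun x => (1 / x) *
        ∑ n ∈ Finset.range (⌊x⌋₊ + 1), Set.indicator A (fun _ => (1 : ℝ)) n with hg
    have hind01 : ∀ n : ℕ, 0 ≤ Set.indicator A (fun _ => (1:ℝ)) n ∧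
        Set.indicator A (fun _ => (1:ℝ)) n ≤ 1 := by
      intro n
      unfold Set.indicator
      split <;> norm_num
    have hfreq : ∃ᶠ x in atTop, (1 : ℝ) - 6*δ ≤ g x := by
      rw [Filter.frequently_atTop]
      intro x₀
      set k : ℕ := max 1 ⌈x₀⌉₊ with hk
      refine ⟨(Nk k : ℝ), ?_, ?_⟩
      · have h1 : ⌈x₀⌉₊ ≤ k := le_max_right _ _
        have h2 : k ≤ Nk k := hNge k
        have h3 : x₀ ≤ (⌈x₀⌉₊ : ℝ) := Nat.le_ceil _
        have h4 : ((⌈x₀⌉₊ : ℕ) : ℝ) ≤ (Nk k : ℝ) := by exact_mod_cast le_trans h1 h2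
        linarith
      · -- the density estimate at x = Nk k
        have hfloor : ⌊((Nk k : ℕ) : ℝ)⌋₊ = Nk k := Nat.floor_natCast _
        have hNpos : 0 < Nk k := lt_of_lt_of_le (by omega : 0 < k) (hNge k)
        have hsub : Fk k ⊆ Finset.range (Nk k + 1) := by
          intro a ha
          rw [Finset.mem_range]
          have := ((hInv k).1 a ha).2
          omega
        have hsum : ((Fk k).card : ℝ) ≤
            ∑ n ∈ Finset.range (Nk k + 1), Set.indicator A (fun _ => (1:ℝ)) n := by
          have h1 : ∑ n ∈ Fk k, Set.indicator A (fun _ => (1:ℝ)) n = ((Fk k).card : ℝ) := by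
            rw [Finset.sum_congr rfl (fun n hn => Set.indicator_of_mem (show n ∈ A from ⟨k, hn⟩) _),
              Finset.sum_const, nsmul_eq_mul, mul_one]
          rw [← h1]
          exact Finset.sum_le_sum_of_subset_of_nonneg hsub
            (fun i _ _ => (hind01 i).1)
        have hcard : (1 - 6*δ) * (Nk k : ℝ) ≤ ((Fk k).card : ℝ) := by
          obtain ⟨j, hj⟩ : ∃ j, k = j + 1 :=
            ⟨k - 1, by omega⟩
          rw [hj]
          exact (hspec j).2.2.2
        rw [hg]
        simp only [hfloor]
        have hNr : (0:ℝ) < (Nk k : ℝ) := by exact_mod_cast hNpos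
        calc (1:ℝ) - 6*δ = ((1 - 6*δ) * Nk k) / Nk k := by field_simp
          _ ≤ ((Fk k).card : ℝ) / Nk k := (div_le_div_iff_of_pos_right hNr).mpr hcard
          _ ≤ (1 / (Nk k : ℝ)) *
              ∑ n ∈ Finset.range (Nk k + 1), Set.indicator A (fun _ => (1:ℝ)) n := by
              rw [one_div, inv_mul_eq_div]
              exact (div_le_div_iff_of_pos_right hNr).mpr hsum
    have hbdd : IsBoundedUnder (· ≤ ·) atTop g := by
      refine isBoundedUnder_of_eventually_le (a := (2:ℝ)) ?_
      filter_upwards [eventually_ge_atTop (1:ℝ)] with x hx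
      have hx0 : (0:ℝ) < x := by linarith
      have h1 : ∑ n ∈ Finset.range (⌊x⌋₊+1), Set.indicator A (fun _ => (1:ℝ)) n ≤
          ((⌊x⌋₊ : ℝ) + 1) := by
        calc ∑ n ∈ Finset.range (⌊x⌋₊+1), Set.indicator A (fun _ => (1:ℝ)) n
            ≤ ∑ _n ∈ Finset.range (⌊x⌋₊+1), (1:ℝ) :=
              Finset.sum_le_sum (fun i _ => (hind01 i).2)
          _ = ((⌊x⌋₊ : ℝ) + 1) := by
              rw [Finset.sum_const, nsmul_eq_mul, mul_one, Finset.card_range]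
              push_cast
              ring
      have h2 : (⌊x⌋₊ : ℝ) ≤ x := Nat.floor_le (by linarith)
      have h3 : g x ≤ (1/x) * (x + 1) := by
        rw [hg]
        apply mul_le_mul_of_nonneg_left ?_ (by positivity)
        linarith
      have h4 : (1/x) * (x + 1) = 1 + 1/x := by field_simp
      have h5 : 1/x ≤ 1 := by
        rw [div_le_one hx0]
        linarith
      linarith
    have hle := Filter.le_limsup_of_frequently_le hfreq hbdd
    have hstrict : 1 - ε < 1 - 6*δ := by
      have h6 : 6*δ = 6*ε'/8 := by rw [hδdef]; ring
      have h7 : ε' ≤ ε := min_le_left _ _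
      linarith
    linarith
end
end
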